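/- Let (X, d_X) and (Y, d_Y) be finite metric spaces, let f : X → Y be a nonexpansive map, and let δ ≥ 0. Then every connected component of the δ-threshold graph of X is contained in f⁻¹(B) for some connected component B of the δ-threshold graph of Y; that is, SL_δ(X) refines f⁻¹(SL_δ(Y)). -/

import Mathlib

/-- A nonexpansive map between metric spaces. -/
def Nonexpansive {X Y : Type*} [MetricSpace X] [MetricSpace Y] (f : X → Y) : Prop :=
  ∀ x x' : X, dist (f x) (f x') ≤ dist x x'

/-- The `δ`-threshold graph of a metric space: distinct points are adjacent
iff their distance is at most `δ`. -/
def thresholdGraph (X : Type*) [MetricSpace X] (δ : ℝ) : SimpleGraph X where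
  Adj x y := x ≠ y ∧ dist x y ≤ δ
  symm := ⟨fun x y h => ⟨h.1.symm, by rw [dist_comm]; exact h.2⟩⟩
  loopless := ⟨fun x h => h.1 rfl⟩

/-- The single-linkage clusters at scale `δ`: the vertex sets of the connected
components of the `δ`-threshold graph. -/
def slClusters (X : Type*) [MetricSpace X] (δ : ℝ) : Set (Set X) :=
  {A : Set X | ∃ c : (thresholdGraph X δ).ConnectedComponent, A = c.supp}

/-- for a nonexpansive map `f : X → Y` of finite metric spaces and `δ ≥ 0`,
every connected component of the `δ`-threshold graph of `X` is contained in `f⁻¹(B)` for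
some connected component `B` of the `δ`-threshold graph of `Y`; i.e. `SL_δ(X)` refines
`f⁻¹(SL_δ(Y))`. -/
theorem SL_refines_pullback {X Y : Type*}
    [MetricSpace X] [Fintype X] [Nonempty X]
    [MetricSpace Y] [Fintype Y] [Nonempty Y]
    (f : X → Y) (hf : Nonexpansive f) (δ : ℝ) (hδ : 0 ≤ δ) :
    ∀ A ∈ slClusters X δ, ∃ B ∈ slClusters Y δ, A ⊆ f ⁻¹' B := by
  rintro A ⟨c, rfl⟩
  obtain ⟨v, rfl⟩ := c.exists_rep
  refine ⟨((thresholdGraph Y δ).connectedComponentMk (f v)).supp,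
    ⟨_, rfl⟩, ?_⟩
  intro a ha
  have hreach : (thresholdGraph X δ).Reachable a v :=
    (SimpleGraph.ConnectedComponent.eq.mp ha)
  have key : ∀ x x' : X, (thresholdGraph X δ).Reachable x x' →
      (thresholdGraph Y δ).Reachable (f x) (f x') := by
    intro x x' h
    obtain ⟨w⟩ := h
    induction w with
    | nil => exact SimpleGraph.Reachable.refl _
    | @cons u b w hadj p ih =>
      refine SimpleGraph.Reachable.trans ?_ ih
      by_cases heq : f u = f b
      · rw [heq]
      · exact SimpleGraph.Adj.reachable (G := thresholdGraph Y δ) (show f u ≠ f b ∧ dist (f u) (f b) ≤ δ from ⟨heq, le_trans (hf u b) hadj.2⟩)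
  exact SimpleGraph.ConnectedComponent.eq.mpr (key a v hreach)
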